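/- Let a ≥ 0, b ∈ {0,1,2}, κ > 3a + b, and set ν = 3a + b, t₃ = κ − ν. Then A(t₃, κ−2a−b, κ−2a−[b>0], κ−2a−[b>1]) ≥ A(t₃, t₃, t₃, κ), where A(t₃, u, v, w) = t₃·[t₃−1]⁺·[w−2]⁺ + t₃·(v−t₃)·[w−1]⁺ + (u−t₃)·t₃·[w−1]⁺ + (u−t₃)·(v−t₃)·w, and [α]⁺ = max(α,0), [P] = 1 if P holds else 0. -/
import Mathlib


/-- The 6-cycle counting function `A` of eq. (8). -/
def cycA (t u v w : ℤ) : ℤ :=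
  t * max (t - 1) 0 * max (w - 2) 0 + t * (v - t) * max (w - 1) 0
    + (u - t) * t * max (w - 1) 0 + (u - t) * (v - t) * w

lemma cycA_aux (t u v w κ : ℤ) (ht : 1 ≤ t) (hu : t ≤ u) (huv : u ≤ v) (hvw : v ≤ w)
    (hκ : κ = u + v + w - 2 * t) : cycA t u v w ≥ cycA t t t κ := by
  simp only [cycA, ge_iff_le]
  rcases le_or_gt 2 w with h2 | h2
  · rw [max_eq_left (by omega : (0:ℤ) ≤ t - 1), max_eq_left (by omega : (0:ℤ) ≤ w - 2),
      max_eq_left (by omega : (0:ℤ) ≤ w - 1), max_eq_left (by omega : (0:ℤ) ≤ κ - 2),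
      max_eq_left (by omega : (0:ℤ) ≤ κ - 1)]
    have key : (t * (t - 1) * (w - 2) + t * (v - t) * (w - 1) + (u - t) * t * (w - 1)
          + (u - t) * (v - t) * w)
        - (t * (t - 1) * (κ - 2) + t * (t - t) * (κ - 1) + (t - t) * t * (κ - 1)
          + (t - t) * (t - t) * κ)
        = t * (u - t + (v - t)) * (w - t) + (u - t) * (v - t) * w := by
      subst hκ; ring
    nlinarith [mul_nonneg (mul_nonneg (by omega : (0:ℤ) ≤ t)
        (by omega : (0:ℤ) ≤ u - t + (v - t))) (by omega : (0:ℤ) ≤ w - t),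
      mul_nonneg (mul_nonneg (by omega : (0:ℤ) ≤ u - t)
        (by omega : (0:ℤ) ≤ v - t)) (by omega : (0:ℤ) ≤ w)]
  · have h' : t = 1 ∧ u = 1 ∧ v = 1 ∧ w = 1 := by omega
    obtain ⟨rfl, rfl, rfl, rfl⟩ := h'
    have : κ = 1 := by omega
    subst this
    norm_num

/-- Proposition 2 in terms of `A`: balanced count ≥ unbalanced count, for `γ_L = 3`. -/
theorem stmt_12 (a b κ : ℤ) (ha : 0 ≤ a) (hb0 : 0 ≤ b) (hb : b < 3)
    (hκ : 3 * a + b < κ) :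
    let ν := 3 * a + b
    let t₃ := κ - ν
    cycA t₃ (κ - 2*a - b) (κ - 2*a - (if 0 < b then 1 else 0))
        (κ - 2*a - (if 1 < b then 1 else 0))
      ≥ cycA t₃ t₃ t₃ κ := by
  intro ν t₃
  apply cycA_aux <;> (try simp only [ν, t₃]) <;> (try split_ifs) <;> omega
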